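/- (No smooth invariant measure for the Suslov problem in a gravitational field.) Consider the Suslov system on ℝ⁵ with parameters I₁, I₂ > 0, I₁₃ ≠ 0, I₂₃ ∈ ℝ with a₃/I₂₃ > 0, and linear potential U(γ) = a₁γ₁ + a₂γ₂ + a₃γ₃, with defining vector field v. Then there is no C¹ function ρ, defined and strictly positive on any open neighborhood of the equilibrium point x₀ = (0, −√(a₃/I₂₃), 0, 1, 0), satisfying the Liouville equation div(ρ·v) = 0 on that neighborhood; in particular the system has no invariant measure with smooth positive density on ℝ⁵. -/

import Mathlib

/-- The Suslov system on ℝ⁵, coordinates `x = (ω₁, ω₂, γ₁, γ₂, γ₃)`, with parameters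
`I₁, I₂ > 0`, `I₁₃, I₂₃ ∈ ℝ` and the linear potential `U = a₁γ₁ + a₂γ₂ + a₃γ₃`:
`I₁ω̇₁ = −ω₂(I₁₃ω₁+I₂₃ω₂) + γ₂a₃ − γ₃a₂`, `I₂ω̇₂ = ω₁(I₁₃ω₁+I₂₃ω₂) + γ₃a₁ − γ₁a₃`,
`γ̇₁ = −γ₃ω₂`, `γ̇₂ = γ₃ω₁`, `γ̇₃ = γ₁ω₂ − γ₂ω₁`. -/
noncomputable def suslovLin (I₁ I₂ I₁₃ I₂₃ a₁ a₂ a₃ : ℝ) (x : Fin 5 → ℝ) : Fin 5 → ℝ :=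
  ![(-(x 1) * (I₁₃ * x 0 + I₂₃ * x 1) + x 3 * a₃ - x 4 * a₂) / I₁,
    ((x 0) * (I₁₃ * x 0 + I₂₃ * x 1) + x 4 * a₁ - x 2 * a₃) / I₂,
    -(x 4) * x 1,
    (x 4) * x 0,
    x 2 * x 1 - x 3 * x 0]

/-- **no smooth invariant measure for the Suslov problem in a gravitational
field.** For the Suslov system with linear potential, `I₁₃ ≠ 0` and `a₃/I₂₃ > 0`, there is
no `C¹` strictly positive density `ρ` on any open neighborhood of the equilibrium
`x₀ = (0, −√(a₃/I₂₃), 0, 1, 0)` satisfying the Liouville equation `div(ρ·v) = 0` there;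
in particular the system has no invariant measure with smooth positive density on ℝ⁵. -/
theorem suslov_no_smooth_invariant_measure
    (I₁ I₂ I₁₃ I₂₃ a₁ a₂ a₃ : ℝ) (hI₁ : 0 < I₁) (hI₂ : 0 < I₂)
    (hI₁₃ : I₁₃ ≠ 0) (ha : 0 < a₃ / I₂₃) :
    ¬ ∃ (Ω : Set (Fin 5 → ℝ)) (ρ : (Fin 5 → ℝ) → ℝ),
        IsOpen Ω ∧ (![0, -Real.sqrt (a₃ / I₂₃), 0, 1, 0] : Fin 5 → ℝ) ∈ Ω ∧
        ContDiffOn ℝ 1 ρ Ω ∧ (∀ x ∈ Ω, 0 < ρ x) ∧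
        (∀ x ∈ Ω, ∑ i, fderiv ℝ
            (fun y => ρ y * suslovLin I₁ I₂ I₁₃ I₂₃ a₁ a₂ a₃ y i) x (Pi.single i 1) = 0) := by
  rintro ⟨Ω, ρ, hΩ, hmem, hC, hpos, hdiv⟩
  set s := Real.sqrt (a₃ / I₂₃) with hs
  have hs0 : 0 < s := Real.sqrt_pos.mpr ha
  have hI₂₃ : I₂₃ ≠ 0 := by rintro rfl; simp at ha
  have hsq : s * s = a₃ / I₂₃ := Real.mul_self_sqrt ha.le
  set x₀ : Fin 5 → ℝ := ![0, -s, 0, 1, 0] with hx₀def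
  have e0 : x₀ 0 = 0 := rfl
  have e1 : x₀ 1 = -s := rfl
  have e2 : x₀ 2 = 0 := rfl
  have e3 : x₀ 3 = 1 := rfl
  have e4 : x₀ 4 = 0 := rfl
  have hρd : HasFDerivAt ρ (fderiv ℝ ρ x₀) x₀ :=
    ((hC.contDiffAt (hΩ.mem_nhds hmem)).differentiableAt one_ne_zero).hasFDerivAt
  have hproj : ∀ j : Fin 5, HasFDerivAt (fun y : Fin 5 → ℝ => y j)
      (ContinuousLinearMap.proj j : (Fin 5 → ℝ) →L[ℝ] ℝ) x₀ :=
    fun j => hasFDerivAt_apply j x₀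
  have h0 := ((((hproj 1).fun_neg.fun_mul (((hproj 0).const_mul I₁₃).fun_add
      ((hproj 1).const_mul I₂₃))).fun_add ((hproj 3).mul_const a₃)).fun_sub
      ((hproj 4).mul_const a₂)).mul_const I₁⁻¹
  have h1 := ((((hproj 0).fun_mul (((hproj 0).const_mul I₁₃).fun_add
      ((hproj 1).const_mul I₂₃))).fun_add ((hproj 4).mul_const a₁)).fun_sub
      ((hproj 2).mul_const a₃)).mul_const I₂⁻¹
  have h2 := (hproj 4).fun_neg.fun_mul (hproj 1)
  have h3 := (hproj 4).fun_mul (hproj 0)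
  have h4 := ((hproj 2).fun_mul (hproj 1)).fun_sub ((hproj 3).fun_mul (hproj 0))
  have key := hdiv x₀ hmem
  rw [Fin.sum_univ_five] at key
  have hEq0 : (fun y => ρ y * suslovLin I₁ I₂ I₁₃ I₂₃ a₁ a₂ a₃ y 0)
      = fun y => ρ y * ((-(y 1) * (I₁₃ * y 0 + I₂₃ * y 1) + y 3 * a₃ - y 4 * a₂) * I₁⁻¹) := by
    funext y; simp only [suslovLin, Matrix.cons_val_zero, div_eq_mul_inv]
  have hEq1 : (fun y => ρ y * suslovLin I₁ I₂ I₁₃ I₂₃ a₁ a₂ a₃ y 1)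
      = fun y => ρ y * ((y 0 * (I₁₃ * y 0 + I₂₃ * y 1) + y 4 * a₁ - y 2 * a₃) * I₂⁻¹) := by
    funext y; simp only [suslovLin, Matrix.cons_val_one, Matrix.head_cons, Matrix.cons_val_zero, div_eq_mul_inv]
  have hEq2 : (fun y => ρ y * suslovLin I₁ I₂ I₁₃ I₂₃ a₁ a₂ a₃ y 2)
      = fun y => ρ y * (-(y 4) * y 1) := by
    funext y; simp only [suslovLin, Matrix.cons_val_two, Matrix.tail_cons, Matrix.head_cons]
  have hEq3 : (fun y => ρ y * suslovLin I₁ I₂ I₁₃ I₂₃ a₁ a₂ a₃ y 3)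
      = fun y => ρ y * (y 4 * y 0) := by
    funext y; simp only [suslovLin, Matrix.cons_val_three, Matrix.tail_cons, Matrix.head_cons]
  have hEq4 : (fun y => ρ y * suslovLin I₁ I₂ I₁₃ I₂₃ a₁ a₂ a₃ y 4)
      = fun y => ρ y * (y 2 * y 1 - y 3 * y 0) := by
    funext y; simp only [suslovLin, Matrix.cons_val_four, Matrix.tail_cons, Matrix.head_cons]
  rw [hEq0, hEq1, hEq2, hEq3, hEq4, (hρd.fun_mul h0).fderiv, (hρd.fun_mul h1).fderiv,
    (hρd.fun_mul h2).fderiv, (hρd.fun_mul h3).fderiv, (hρd.fun_mul h4).fderiv] at key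
  simp only [e0, e1, e2, e3, e4, ContinuousLinearMap.add_apply,
    ContinuousLinearMap.coe_smul', Pi.smul_apply, ContinuousLinearMap.neg_apply,
    ContinuousLinearMap.coe_sub', Pi.sub_apply, ContinuousLinearMap.proj_apply,
    Pi.single_eq_same, ne_eq, Pi.single_eq_of_ne, smul_eq_mul] at key
  have ha3 : I₂₃ * (s * s) = a₃ := by rw [hsq]; field_simp
  simp only [Pi.single_apply] at key
  norm_num at key
  rw [show (-(s * (I₂₃ * s)) + a₃) = 0 from by rw [← ha3]; ring] at key
  simp at key
  rcases key with h | h | h | h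
  · exact absurd h (hpos _ hmem).ne'
  · exact absurd h hI₁.ne'
  · exact absurd h hs0.ne'
  · exact hI₁₃ h
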